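/- For every positive integer n and every real number M, there exists a real number ω > 1 such that for all integers r, d, s with nd² − rs = −1, one has ((s − nω²r)² + 4n²ω²d²) / (4nω²) > M. -/
import Mathlib


set_option maxHeartbeats 1600000 in
/-- Unboundedness of the spherical systolic ratio: for every positive integer `n`
and real `M`, there exists `ω > 1` such that every integer solution of
`nd² − rs = −1` has `((s − nω²r)² + 4n²ω²d²)/(4nω²) > M`. -/
theorem stmt_6 (n : ℕ) (hn : 0 < n) (M : ℝ) :
    ∃ ω : ℝ, 1 < ω ∧ ∀ r d s : ℤ, (n : ℤ) * d ^ 2 - r * s = -1 →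
      (((s : ℝ) - n * ω ^ 2 * r) ^ 2 + 4 * n ^ 2 * ω ^ 2 * d ^ 2) / (4 * n * ω ^ 2) > M := by
  set B : ℝ := |M| + 1 with hBdef
  have hB1 : 1 ≤ B := by have := abs_nonneg M; linarith
  have hMB : M ≤ B := by have := le_abs_self M; linarith
  have hC : (1:ℝ) < 18 * B + 2 := by linarith
  refine ⟨Real.sqrt (18 * B + 2), ?_, ?_⟩
  · rw [show (1:ℝ) = Real.sqrt 1 by simp]
    exact Real.sqrt_lt_sqrt (by norm_num) hC
  · intro r d s hrds
    set ω : ℝ := Real.sqrt (18 * B + 2) with hωdef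
    have hω2 : ω ^ 2 = 18 * B + 2 := Real.sq_sqrt (by linarith)
    have hn1 : (1:ℝ) ≤ (n:ℝ) := by exact_mod_cast hn
    have hp1 : 18 * B + 2 ≤ (n:ℝ) * ω ^ 2 := by
      rw [hω2]; nlinarith
    have hppos : (0:ℝ) < (n:ℝ) * ω ^ 2 := by nlinarith
    have hR : (n:ℝ) * (d:ℝ) ^ 2 - (r:ℝ) * s = -1 := by exact_mod_cast hrds
    have hdenpos : (0:ℝ) < 4 * (n:ℝ) * ω ^ 2 := by nlinarith
    rw [gt_iff_lt, lt_div_iff₀ hdenpos]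
    have hterm : (0:ℝ) ≤ 4 * (n:ℝ) ^ 2 * ω ^ 2 * (d:ℝ) ^ 2 := by positivity
    by_cases hd : M < (n:ℝ) * (d:ℝ) ^ 2
    · have key : M * (4 * (n:ℝ) * ω ^ 2) < ((n:ℝ) * (d:ℝ) ^ 2) * (4 * (n:ℝ) * ω ^ 2) :=
        (mul_lt_mul_of_pos_right hd hdenpos)
      nlinarith [sq_nonneg ((s:ℝ) - (n:ℝ) * ω ^ 2 * (r:ℝ))]
    · push_neg at hd
      -- rs = nd² + 1, so 1 ≤ rs ≤ B
      have hrs1 : (1:ℤ) ≤ r * s := by nlinarith [sq_nonneg d, hn.le]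
      have hrsR : (r:ℝ) * s = (n:ℝ) * (d:ℝ) ^ 2 + 1 := by linarith
      have hM' : M ≤ |M| := le_abs_self M
      have hrsB : (r:ℝ) * s ≤ B := by rw [hBdef]; linarith
      have hpos : (0 < r ∧ 0 < s) ∨ (r < 0 ∧ s < 0) :=
        mul_pos_iff.mp (by linarith : (0:ℤ) < r * s)
      rcases hpos with ⟨hr, hs⟩ | ⟨hr, hs⟩
      · have hr1 : (1:ℝ) ≤ (r:ℝ) := by exact_mod_cast hr
        have hs1 : (1:ℝ) ≤ (s:ℝ) := by exact_mod_cast hs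
        have hsB : (s:ℝ) ≤ B := by nlinarith
        have hPle : (s:ℝ) - (n:ℝ) * ω ^ 2 * r ≤ B - (n:ℝ) * ω ^ 2 := by nlinarith
        have hsq : ((n:ℝ) * ω ^ 2 - B) * ((n:ℝ) * ω ^ 2 - B) ≤
            (-((s:ℝ) - (n:ℝ) * ω ^ 2 * r)) * (-((s:ℝ) - (n:ℝ) * ω ^ 2 * r)) :=
          mul_self_le_mul_self (by linarith) (by linarith)
        nlinarith [mul_nonneg (show (0:ℝ) ≤ (n:ℝ) * ω ^ 2 - (18 * B + 2) by linarith) hppos.le]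
      · have hr1 : (r:ℝ) ≤ -1 := by exact_mod_cast (by omega : r ≤ -1)
        have hs1 : (s:ℝ) ≤ -1 := by exact_mod_cast (by omega : s ≤ -1)
        have hsB : -B ≤ (s:ℝ) := by
          nlinarith [mul_nonneg (by linarith : (0:ℝ) ≤ -(s:ℝ)) (by linarith : (0:ℝ) ≤ -((r:ℝ) + 1))]
        have hPge : (n:ℝ) * ω ^ 2 - B ≤ (s:ℝ) - (n:ℝ) * ω ^ 2 * r := by
          nlinarith [mul_le_mul_of_nonneg_left hr1 hppos.le]
        have hsq : ((n:ℝ) * ω ^ 2 - B) * ((n:ℝ) * ω ^ 2 - B) ≤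
            ((s:ℝ) - (n:ℝ) * ω ^ 2 * r) * ((s:ℝ) - (n:ℝ) * ω ^ 2 * r) :=
          mul_self_le_mul_self (by linarith) (by linarith)
        nlinarith [mul_nonneg (show (0:ℝ) ≤ (n:ℝ) * ω ^ 2 - (18 * B + 2) by linarith) hppos.le]
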